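/- Let S be a proper sampling over [n] with probability matrix P and probability vector p (p_i > 0), and suppose v ∈ ℝ^n satisfies P − p pᵀ ⪯ Diag(p₁v₁, …, p_n v_n). Then for any vectors ζ₁, …, ζ_n ∈ ℝ^d with average ζ̄ = (1/n)Σζ_i, E[‖Σ_{i∈S} ζ_i/(n p_i) − ζ̄‖²] ≤ (1/n²)·Σ_{i=1}^n (v_i/p_i)·‖ζ_i‖². -/

import Mathlib

open Finset
open scoped RealInnerProductSpace

private lemma sum_eq_sum_ite {α : Type*} [Fintype α] [DecidableEq α]
    (s : Finset α) (f : α → ℝ) :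
    ∑ i ∈ s, f i = ∑ i, if i ∈ s then f i else 0 := by
  rw [Finset.sum_ite_mem, Finset.univ_inter]


/-- For a proper sampling `S` over `[n]` (modeled by a probability
mass function `w` on subsets of `Fin n`) with probability matrix `P` and probability
vector `p`, if `v ∈ ℝ^n` satisfies `P − p pᵀ ⪯ Diag(p₁v₁, …, p_n v_n)`, then for any
vectors `ζ₁, …, ζ_n ∈ ℝ^d` with average `ζ̄`,
`E‖Σ_{i∈S} ζ_i/(n p_i) − ζ̄‖² ≤ (1/n²) Σᵢ (v_i/p_i) ‖ζ_i‖²`. -/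
theorem subsampled_estimator_variance_bound {n d : ℕ} (hn : 1 ≤ n)
    (w : Finset (Fin n) → ℝ) (hw : ∀ s, 0 ≤ w s)
    (hsum : ∑ s : Finset (Fin n), w s = 1)
    (P : Matrix (Fin n) (Fin n) ℝ)
    (hP : ∀ i j, P i j = ∑ s : Finset (Fin n), if i ∈ s ∧ j ∈ s then w s else 0)
    (p : Fin n → ℝ)
    (hp : ∀ i, p i = ∑ s : Finset (Fin n), if i ∈ s then w s else 0)
    (hproper : ∀ i, 0 < p i)
    (v : Fin n → ℝ)
    (hv : (Matrix.diagonal (fun i => p i * v i) - (P - Matrix.vecMulVec p p)).PosSemidef)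
    (ζ : Fin n → EuclideanSpace ℝ (Fin d))
    (ζbar : EuclideanSpace ℝ (Fin d)) (hζbar : ζbar = (1 / (n : ℝ)) • ∑ i, ζ i) :
    ∑ s : Finset (Fin n), w s * ‖(∑ i ∈ s, (1 / ((n : ℝ) * p i)) • ζ i) - ζbar‖ ^ 2
      ≤ (1 / (n : ℝ) ^ 2) * ∑ i, (v i / p i) * ‖ζ i‖ ^ 2 := by
  have hn' : (0:ℝ) < n := by exact_mod_cast hn
  set a : Fin n → ℝ := fun i => 1 / ((n:ℝ) * p i) with ha
  have hpa : ∀ i, p i * a i = 1 / n := by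
    intro i
    have := (hproper i).ne'
    simp only [ha]
    field_simp
  set c : Fin n → Fin n → ℝ := fun i j => a i * a j * ⟪ζ i, ζ j⟫ with hc
  -- expand the squared norm for each s
  have hexp : ∀ s : Finset (Fin n),
      ‖(∑ i ∈ s, a i • ζ i) - ζbar‖ ^ 2
        = (∑ i, ∑ j, if i ∈ s ∧ j ∈ s then c i j else 0)
          - 2 * (∑ i, if i ∈ s then a i * ⟪ζ i, ζbar⟫ else 0) + ‖ζbar‖ ^ 2 := by
    intro s
    have h1 : ‖(∑ i ∈ s, a i • ζ i) - ζbar‖ ^ 2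
        = ⟪∑ i ∈ s, a i • ζ i, ∑ j ∈ s, a j • ζ j⟫
          - 2 * ⟪∑ i ∈ s, a i • ζ i, ζbar⟫ + ‖ζbar‖ ^ 2 := by
      rw [norm_sub_sq_real, real_inner_self_eq_norm_sq]
    rw [h1]
    congr 2
    · rw [sum_inner]
      have h2 : ∀ i, ⟪a i • ζ i, ∑ j ∈ s, a j • ζ j⟫ = ∑ j ∈ s, c i j := by
        intro i
        rw [inner_sum]
        refine Finset.sum_congr rfl fun j _ => ?_
        rw [real_inner_smul_left, real_inner_smul_right, hc]; ring
      calc ∑ i ∈ s, ⟪a i • ζ i, ∑ j ∈ s, a j • ζ j⟫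
          = ∑ i ∈ s, ∑ j ∈ s, c i j := Finset.sum_congr rfl fun i _ => h2 i
        _ = ∑ i, ∑ j, if i ∈ s ∧ j ∈ s then c i j else 0 := by
            rw [sum_eq_sum_ite s (fun i => ∑ j ∈ s, c i j)]
            refine Finset.sum_congr rfl fun i _ => ?_
            by_cases hi : i ∈ s
            · simp only [hi, if_true, true_and]
              exact sum_eq_sum_ite s (fun j => c i j)
            · simp [hi]
    · congr 1
      rw [sum_inner, sum_eq_sum_ite s (fun i => ⟪a i • ζ i, ζbar⟫)]
      refine Finset.sum_congr rfl fun i _ => ?_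
      by_cases hi : i ∈ s
      · simp only [hi, if_true]
        rw [real_inner_smul_left]
      · simp [hi]
  -- the three terms
  have hT1 : ∑ s : Finset (Fin n), w s * (∑ i, ∑ j, if i ∈ s ∧ j ∈ s then c i j else 0)
      = ∑ i, ∑ j, P i j * c i j := by
    calc ∑ s : Finset (Fin n), w s * (∑ i, ∑ j, if i ∈ s ∧ j ∈ s then c i j else 0)
        = ∑ s : Finset (Fin n), ∑ i, ∑ j, w s * (if i ∈ s ∧ j ∈ s then c i j else 0) := by
          simp_rw [Finset.mul_sum]
      _ = ∑ i, ∑ s : Finset (Fin n), ∑ j, w s * (if i ∈ s ∧ j ∈ s then c i j else 0) :=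
          Finset.sum_comm
      _ = ∑ i, ∑ j, ∑ s : Finset (Fin n), w s * (if i ∈ s ∧ j ∈ s then c i j else 0) :=
          Finset.sum_congr rfl fun i _ => Finset.sum_comm
      _ = ∑ i, ∑ j, P i j * c i j := by
          refine Finset.sum_congr rfl fun i _ => Finset.sum_congr rfl fun j _ => ?_
          rw [hP, Finset.sum_mul]
          refine Finset.sum_congr rfl fun s _ => ?_
          by_cases h : i ∈ s ∧ j ∈ s <;> simp [h]
  have hT2 : ∑ s : Finset (Fin n), w s * (∑ i, if i ∈ s then a i * ⟪ζ i, ζbar⟫ else 0)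
      = ‖ζbar‖ ^ 2 := by
    calc ∑ s : Finset (Fin n), w s * (∑ i, if i ∈ s then a i * ⟪ζ i, ζbar⟫ else 0)
        = ∑ s : Finset (Fin n), ∑ i, w s * (if i ∈ s then a i * ⟪ζ i, ζbar⟫ else 0) := by
          simp_rw [Finset.mul_sum]
      _ = ∑ i, ∑ s : Finset (Fin n), w s * (if i ∈ s then a i * ⟪ζ i, ζbar⟫ else 0) :=
          Finset.sum_comm
      _ = ∑ i, p i * a i * ⟪ζ i, ζbar⟫ := by
          refine Finset.sum_congr rfl fun i _ => ?_
          rw [hp, Finset.sum_mul]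
          rw [Finset.sum_mul]
          refine Finset.sum_congr rfl fun s _ => ?_
          by_cases h : i ∈ s <;> simp [h]; ring
      _ = ⟪(1 / (n:ℝ)) • ∑ i, ζ i, ζbar⟫ := by
          rw [real_inner_smul_left, sum_inner, Finset.mul_sum]
          exact Finset.sum_congr rfl fun i _ => by rw [hpa i]
      _ = ‖ζbar‖ ^ 2 := by rw [← hζbar, real_inner_self_eq_norm_sq]
  -- ‖ζbar‖² as double sum
  have hbar : ‖ζbar‖ ^ 2 = ∑ i, ∑ j, (p i * p j) * c i j := by
    rw [← real_inner_self_eq_norm_sq, hζbar, real_inner_smul_left, inner_smul_right,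
      sum_inner, Finset.mul_sum, Finset.mul_sum]
    refine Finset.sum_congr rfl fun i _ => ?_
    rw [inner_sum, Finset.mul_sum, Finset.mul_sum]
    refine Finset.sum_congr rfl fun j _ => ?_
    have h1 := hpa i; have h2 := hpa j
    rw [hc]
    have : p i * p j * (a i * a j * ⟪ζ i, ζ j⟫) = (p i * a i) * (p j * a j) * ⟪ζ i, ζ j⟫ := by ring
    rw [this, h1, h2]; ring
  -- LHS equals variance form
  have hLHS : ∑ s : Finset (Fin n), w s * ‖(∑ i ∈ s, a i • ζ i) - ζbar‖ ^ 2
      = ∑ i, ∑ j, (P i j - p i * p j) * c i j := by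
    calc ∑ s : Finset (Fin n), w s * ‖(∑ i ∈ s, a i • ζ i) - ζbar‖ ^ 2
        = ∑ s : Finset (Fin n), (w s * (∑ i, ∑ j, if i ∈ s ∧ j ∈ s then c i j else 0)
            - 2 * (w s * (∑ i, if i ∈ s then a i * ⟪ζ i, ζbar⟫ else 0)) + w s * ‖ζbar‖ ^ 2) := by
          refine Finset.sum_congr rfl fun s _ => ?_
          rw [hexp s]; ring
      _ = (∑ i, ∑ j, P i j * c i j) - 2 * ‖ζbar‖ ^ 2 + ‖ζbar‖ ^ 2 := by
          rw [Finset.sum_add_distrib, Finset.sum_sub_distrib, hT1, ← Finset.mul_sum, hT2,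
            ← Finset.sum_mul, hsum, one_mul]
      _ = (∑ i, ∑ j, P i j * c i j) - (∑ i, ∑ j, (p i * p j) * c i j) := by
          rw [hbar]; ring
      _ = ∑ i, ∑ j, (P i j - p i * p j) * c i j := by
          rw [← Finset.sum_sub_distrib]
          refine Finset.sum_congr rfl fun i _ => ?_
          rw [← Finset.sum_sub_distrib]
          exact Finset.sum_congr rfl fun j _ => by ring
  -- PSD bound coordinatewise
  have hkey : ∑ i, ∑ j, (P i j - p i * p j) * c i j
      ≤ ∑ i, p i * v i * (a i ^ 2 * ‖ζ i‖ ^ 2) := by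
    have hco : ∀ k : Fin d,
        ∑ i, ∑ j, (P i j - p i * p j) * ((a i * ζ i k) * (a j * ζ j k))
          ≤ ∑ i, p i * v i * (a i * ζ i k) ^ 2 := by
      intro k
      set x : Fin n → ℝ := fun i => a i * ζ i k with hx
      have h0 := hv.dotProduct_mulVec_nonneg x
      have hexpand : dotProduct (star x) (((Matrix.diagonal (fun i => p i * v i)
          - (P - Matrix.vecMulVec p p))).mulVec x)
          = (∑ i, p i * v i * x i ^ 2)
            - ∑ i, ∑ j, (P i j - p i * p j) * (x i * x j) := by
        simp only [dotProduct, Matrix.mulVec, Matrix.sub_apply,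
          Matrix.vecMulVec_apply, star_trivial]
        rw [← Finset.sum_sub_distrib]
        refine Finset.sum_congr rfl fun i _ => ?_
        rw [Finset.mul_sum]
        have hdiag : ∑ j, x i * ((Matrix.diagonal (fun i => p i * v i)) i j * x j)
            = p i * v i * x i ^ 2 := by
          rw [Finset.sum_eq_single i]
          · rw [Matrix.diagonal_apply_eq]; ring
          · intro j _ hj
            rw [Matrix.diagonal_apply_ne _ (Ne.symm hj)]; ring
          · intro h; exact absurd (Finset.mem_univ i) h
        calc ∑ j, x i * (((Matrix.diagonal fun i => p i * v i) i j
                - (P i j - p i * p j)) * x j)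
            = ∑ j, (x i * ((Matrix.diagonal fun i => p i * v i) i j * x j)
                - (P i j - p i * p j) * (x i * x j)) := by
              refine Finset.sum_congr rfl fun j _ => by ring
          _ = _ := by rw [Finset.sum_sub_distrib, hdiag]
      rw [hexpand] at h0
      linarith
    have hsumk := Finset.sum_le_sum (fun k (_ : k ∈ (Finset.univ : Finset (Fin d))) => hco k)
    have hcij : ∀ i j, (P i j - p i * p j) * c i j
        = ∑ k : Fin d, (P i j - p i * p j) * ((a i * ζ i k) * (a j * ζ j k)) := by
      intro i j
      rw [hc]
      simp only [PiLp.inner_apply, RCLike.inner_apply, starRingEnd_apply, star_trivial]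
      rw [Finset.mul_sum, Finset.mul_sum]
      exact Finset.sum_congr rfl fun k _ => by ring
    calc ∑ i, ∑ j, (P i j - p i * p j) * c i j
        = ∑ i, ∑ j, ∑ k : Fin d, (P i j - p i * p j) * ((a i * ζ i k) * (a j * ζ j k)) :=
          Finset.sum_congr rfl fun i _ => Finset.sum_congr rfl fun j _ => hcij i j
      _ = ∑ i, ∑ k : Fin d, ∑ j, (P i j - p i * p j) * ((a i * ζ i k) * (a j * ζ j k)) :=
          Finset.sum_congr rfl fun i _ => Finset.sum_comm
      _ = ∑ k : Fin d, ∑ i, ∑ j, (P i j - p i * p j) * ((a i * ζ i k) * (a j * ζ j k)) :=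
          Finset.sum_comm
      _ ≤ ∑ k : Fin d, ∑ i, p i * v i * (a i * ζ i k) ^ 2 := hsumk
      _ = ∑ i, ∑ k : Fin d, p i * v i * (a i * ζ i k) ^ 2 := Finset.sum_comm
      _ = ∑ i, p i * v i * (a i ^ 2 * ‖ζ i‖ ^ 2) := by
          refine Finset.sum_congr rfl fun i _ => ?_
          rw [← real_inner_self_eq_norm_sq]
          simp only [PiLp.inner_apply, RCLike.inner_apply, starRingEnd_apply, star_trivial]
          rw [Finset.mul_sum, Finset.mul_sum]
          refine Finset.sum_congr rfl fun k _ => by ring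
  -- conclude
  have hRHS : ∑ i, p i * v i * (a i ^ 2 * ‖ζ i‖ ^ 2)
      = (1 / (n : ℝ) ^ 2) * ∑ i, (v i / p i) * ‖ζ i‖ ^ 2 := by
    rw [Finset.mul_sum]
    refine Finset.sum_congr rfl fun i _ => ?_
    have hpi := (hproper i).ne'
    rw [ha]
    field_simp
  calc ∑ s : Finset (Fin n), w s * ‖(∑ i ∈ s, a i • ζ i) - ζbar‖ ^ 2
      = ∑ i, ∑ j, (P i j - p i * p j) * c i j := hLHS
    _ ≤ ∑ i, p i * v i * (a i ^ 2 * ‖ζ i‖ ^ 2) := hkey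
    _ = (1 / (n : ℝ) ^ 2) * ∑ i, (v i / p i) * ‖ζ i‖ ^ 2 := hRHS
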